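/- Let X be a nonnegative random variable on a probability space, and let K > 0, t ≥ 0, z ≥ 0 be such that for every integer n ≥ 1 one has E[Xⁿ] ≤ zⁿ + ∑_{ℓ=1}^{n} (Kˡ (n!/(n−ℓ)!)² / ℓ!) · z^{n−ℓ} tˡ. Then there exists θ > 0 such that E[e^{θX}] < ∞. -/

import Mathlib

open MeasureTheory

lemma choose_le_two_pow' (n ℓ : ℕ) : n.choose ℓ ≤ 2 ^ n := by
  rcases le_or_gt ℓ n with h | h
  · calc n.choose ℓ ≤ ∑ m ∈ Finset.range (n + 1), n.choose m :=
        Finset.single_le_sum (fun i _ => Nat.zero_le _)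
          (Finset.mem_range.mpr (Nat.lt_succ_of_le h))
    _ = 2 ^ n := Nat.sum_range_choose n
  · rw [Nat.choose_eq_zero_of_lt h]; exact Nat.zero_le _

lemma div_mul_helper (a b c f : ℝ) (hf : f ≠ 0) : a / f * (c * b * f) = c * (a * b) := by
  field_simp

/-- If the entire moments of a nonnegative random variable `X` satisfy
`E[Xⁿ] ≤ zⁿ + ∑_{ℓ=1}^n Kˡ (n!/(n-ℓ)!)²/ℓ! · z^{n-ℓ} tˡ` for all `n ≥ 1`, then
`E[e^{θX}] < ∞` for some `θ > 0`. -/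
theorem exists_exponential_moment
    {Ω : Type*} [MeasurableSpace Ω] (P : Measure Ω) [IsProbabilityMeasure P]
    (X : Ω → ℝ) (hX : Measurable X) (hX0 : ∀ ω, 0 ≤ X ω)
    (K t z : ℝ) (hK : 0 < K) (ht : 0 ≤ t) (hz : 0 ≤ z)
    (hmom : ∀ n : ℕ, 1 ≤ n →
      ∫⁻ ω, ENNReal.ofReal ((X ω) ^ n) ∂P ≤
        ENNReal.ofReal (z ^ n + ∑ ℓ ∈ Finset.Icc 1 n,
          K ^ ℓ * ((n.descFactorial ℓ : ℝ)) ^ 2 / (Nat.factorial ℓ : ℝ)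
            * z ^ (n - ℓ) * t ^ ℓ)) :
    ∃ θ : ℝ, 0 < θ ∧ ∫⁻ ω, ENNReal.ofReal (Real.exp (θ * X ω)) ∂P < ⊤ := by
  set M : ℝ := max (max (K * t) z) 1 with hMdef
  have hM1 : (1 : ℝ) ≤ M := le_max_right _ _
  have hM0 : (0 : ℝ) < M := lt_of_lt_of_le one_pos hM1
  have hMKt : K * t ≤ M := le_trans (le_max_left _ _) (le_max_left _ _)
  have hMz : z ≤ M := le_trans (le_max_right _ _) (le_max_left _ _)
  set A : ℝ := 4 * M with hAdef
  have hA1 : (1 : ℝ) ≤ A := by nlinarith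
  have hA0 : (0 : ℝ) < A := lt_of_lt_of_le one_pos hA1
  set θ : ℝ := 1 / (2 * A) with hθdef
  have hθ0 : 0 < θ := by positivity
  have hθA : θ * A = 1 / 2 := by
    rw [hθdef]; field_simp
  refine ⟨θ, hθ0, ?_⟩
  -- Step 1: moment bound E[X^n] ≤ (n+1) A^n n!
  have key : ∀ n : ℕ, ∫⁻ ω, ENNReal.ofReal ((X ω) ^ n) ∂P ≤
      ENNReal.ofReal ((n + 1 : ℝ) * A ^ n * (n.factorial : ℝ)) := by
    intro n
    rcases Nat.eq_zero_or_pos n with h0 | h1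
    · subst h0
      simp only [pow_zero, Nat.factorial_zero, Nat.cast_zero, Nat.cast_one, zero_add,
        one_mul, mul_one]
      rw [lintegral_const, measure_univ, mul_one]
    · refine (hmom n h1).trans (ENNReal.ofReal_le_ofReal ?_)
      have hterm : ∀ ℓ ∈ Finset.Icc 1 n,
          K ^ ℓ * ((n.descFactorial ℓ : ℝ)) ^ 2 / (Nat.factorial ℓ : ℝ)
            * z ^ (n - ℓ) * t ^ ℓ ≤ A ^ n * (n.factorial : ℝ) := by
        intro ℓ hℓ
        obtain ⟨hℓ1, hℓn⟩ := Finset.mem_Icc.mp hℓ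
        have hd : (n.descFactorial ℓ : ℝ) = (ℓ.factorial : ℝ) * (n.choose ℓ : ℝ) := by
          exact_mod_cast congrArg (Nat.cast (R := ℝ))
            (Nat.descFactorial_eq_factorial_mul_choose n ℓ)
        have hfac0 : (0 : ℝ) < (ℓ.factorial : ℝ) := by
          exact_mod_cast ℓ.factorial_pos
        have hre : K ^ ℓ * ((n.descFactorial ℓ : ℝ)) ^ 2 / (Nat.factorial ℓ : ℝ)
            * z ^ (n - ℓ) * t ^ ℓ
            = ((K * t) ^ ℓ * z ^ (n - ℓ)) * ((ℓ.factorial : ℝ) * (n.choose ℓ : ℝ) ^ 2) := by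
          rw [hd]; field_simp; ring
        rw [hre]
        have h1' : (K * t) ^ ℓ * z ^ (n - ℓ) ≤ M ^ n := by
          calc (K * t) ^ ℓ * z ^ (n - ℓ) ≤ M ^ ℓ * M ^ (n - ℓ) :=
              mul_le_mul (pow_le_pow_left₀ (by positivity) hMKt ℓ)
                (pow_le_pow_left₀ hz hMz (n - ℓ)) (by positivity) (by positivity)
          _ = M ^ n := by rw [← pow_add]; congr 1; omega
        have h2' : (ℓ.factorial : ℝ) * (n.choose ℓ : ℝ) ^ 2
            ≤ (n.factorial : ℝ) * (4 : ℝ) ^ n := by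
          have hf : (ℓ.factorial : ℝ) ≤ (n.factorial : ℝ) := by
            exact_mod_cast Nat.factorial_le hℓn
          have hc : (n.choose ℓ : ℝ) ≤ (2 : ℝ) ^ n := by
            exact_mod_cast choose_le_two_pow' n ℓ
          have hc2 : (n.choose ℓ : ℝ) ^ 2 ≤ (4 : ℝ) ^ n := by
            calc (n.choose ℓ : ℝ) ^ 2 ≤ ((2 : ℝ) ^ n) ^ 2 :=
                pow_le_pow_left₀ (by positivity) hc 2
            _ = (4 : ℝ) ^ n := by rw [← pow_mul, mul_comm, pow_mul]; norm_num
          exact mul_le_mul hf hc2 (by positivity) (by positivity)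
        calc ((K * t) ^ ℓ * z ^ (n - ℓ)) * ((ℓ.factorial : ℝ) * (n.choose ℓ : ℝ) ^ 2)
            ≤ M ^ n * ((n.factorial : ℝ) * (4 : ℝ) ^ n) :=
              mul_le_mul h1' h2' (by positivity) (by positivity)
          _ = A ^ n * (n.factorial : ℝ) := by
              rw [hAdef, mul_pow]; ring
      have hsum : ∑ ℓ ∈ Finset.Icc 1 n,
          K ^ ℓ * ((n.descFactorial ℓ : ℝ)) ^ 2 / (Nat.factorial ℓ : ℝ)
            * z ^ (n - ℓ) * t ^ ℓ ≤ (n : ℝ) * (A ^ n * (n.factorial : ℝ)) := by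
        calc _ ≤ ∑ _ℓ ∈ Finset.Icc 1 n, A ^ n * (n.factorial : ℝ) :=
            Finset.sum_le_sum hterm
        _ = (n : ℝ) * (A ^ n * (n.factorial : ℝ)) := by
            rw [Finset.sum_const, Nat.card_Icc]; simp [nsmul_eq_mul]
      have hzn : z ^ n ≤ A ^ n * (n.factorial : ℝ) := by
        have h1'' : z ^ n ≤ A ^ n := pow_le_pow_left₀ hz (le_trans hMz (by nlinarith)) n
        have h2'' : (1 : ℝ) ≤ (n.factorial : ℝ) := by exact_mod_cast n.factorial_pos
        nlinarith [pow_nonneg hA0.le n]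
      calc z ^ n + ∑ ℓ ∈ Finset.Icc 1 n,
          K ^ ℓ * ((n.descFactorial ℓ : ℝ)) ^ 2 / (Nat.factorial ℓ : ℝ)
            * z ^ (n - ℓ) * t ^ ℓ
          ≤ A ^ n * (n.factorial : ℝ) + (n : ℝ) * (A ^ n * (n.factorial : ℝ)) :=
            add_le_add hzn hsum
        _ = (n + 1 : ℝ) * A ^ n * (n.factorial : ℝ) := by ring
  -- Step 2: expand the exponential
  have hexp : ∀ ω, ENNReal.ofReal (Real.exp (θ * X ω))
      = ∑' n : ℕ, ENNReal.ofReal ((θ * X ω) ^ n / (n.factorial : ℝ)) := by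
    intro ω
    have hser : Real.exp (θ * X ω) = ∑' n : ℕ, (θ * X ω) ^ n / (n.factorial : ℝ) := by
      rw [Real.exp_eq_exp_ℝ, NormedSpace.exp_eq_tsum_div]
    rw [hser]
    exact ENNReal.ofReal_tsum_of_nonneg
      (fun n => div_nonneg (pow_nonneg (mul_nonneg hθ0.le (hX0 ω)) n) (by positivity))
      (Real.summable_pow_div_factorial _)
  calc ∫⁻ ω, ENNReal.ofReal (Real.exp (θ * X ω)) ∂P
      = ∫⁻ ω, ∑' n : ℕ, ENNReal.ofReal ((θ * X ω) ^ n / (n.factorial : ℝ)) ∂P := by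
        simp_rw [hexp]
    _ = ∑' n : ℕ, ∫⁻ ω, ENNReal.ofReal ((θ * X ω) ^ n / (n.factorial : ℝ)) ∂P :=
        lintegral_tsum (fun n => by
          apply Measurable.aemeasurable
          exact (((hX.const_mul θ).pow_const n).div_const _).ennreal_ofReal)
    _ ≤ ∑' n : ℕ, ENNReal.ofReal ((n + 1 : ℝ) * (1 / 2 : ℝ) ^ n) := by
        refine ENNReal.tsum_le_tsum (fun n => ?_)
        have hre : ∀ ω, ENNReal.ofReal ((θ * X ω) ^ n / (n.factorial : ℝ))
            = ENNReal.ofReal (θ ^ n / (n.factorial : ℝ)) * ENNReal.ofReal ((X ω) ^ n) := by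
          intro ω
          rw [← ENNReal.ofReal_mul (by positivity)]
          congr 1
          rw [mul_pow]; ring
        simp_rw [hre]
        rw [lintegral_const_mul _ (hX.pow_const n).ennreal_ofReal]
        calc ENNReal.ofReal (θ ^ n / (n.factorial : ℝ)) * ∫⁻ ω, ENNReal.ofReal ((X ω) ^ n) ∂P
            ≤ ENNReal.ofReal (θ ^ n / (n.factorial : ℝ))
              * ENNReal.ofReal ((n + 1 : ℝ) * A ^ n * (n.factorial : ℝ)) :=
              mul_le_mul_right (key n) _
          _ = ENNReal.ofReal ((n + 1 : ℝ) * (1 / 2 : ℝ) ^ n) := by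
              rw [← ENNReal.ofReal_mul (by positivity)]
              congr 1
              have hfac0 : (0 : ℝ) < (n.factorial : ℝ) := by
                exact_mod_cast n.factorial_pos
              calc θ ^ n / (n.factorial : ℝ) * ((n + 1 : ℝ) * A ^ n * (n.factorial : ℝ))
                  = (n + 1 : ℝ) * (θ ^ n * A ^ n) :=
                    div_mul_helper _ _ _ _ hfac0.ne'
                _ = (n + 1 : ℝ) * (1 / 2 : ℝ) ^ n := by rw [← mul_pow, hθA]
    _ < ⊤ := by
        have hs : Summable (fun n : ℕ => (n + 1 : ℝ) * (1 / 2 : ℝ) ^ n) := by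
          have h1 : Summable (fun n : ℕ => (n : ℝ) * (1 / 2 : ℝ) ^ n) := by
            have := summable_pow_mul_geometric_of_norm_lt_one (R := ℝ) 1
              (r := (1 / 2 : ℝ)) (by
                rw [Real.norm_eq_abs, abs_of_nonneg (by norm_num : (0:ℝ) ≤ 1 / 2)]; norm_num)
            simpa using this
          have h2 : Summable (fun n : ℕ => (1 / 2 : ℝ) ^ n) :=
            summable_geometric_of_lt_one (by norm_num) (by norm_num)
          have := h1.add h2
          convert this using 2 with n
          ring
        rw [← ENNReal.ofReal_tsum_of_nonneg (fun n => by positivity) hs]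
        exact ENNReal.ofReal_lt_top
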